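/- (Conditional Borel–Cantelli-type zero-one estimate) Let (Ω̃, P̃, G, (G_t)_{t≥0}) be a filtered probability space and (s_n) an increasing sequence with s_n → ∞. Suppose events (E_n) and (G_n) satisfy: (1) E_n, G_n ∈ G_{s_n}; (2) there exist p > 0 and a sequence (b_n) with Σ b_n = ∞ such that P̃(G_n^c) ≤ p and P̃(E_{n+1} | G_{s_n}) ≥ b_n 1_{G_n} a.s., for all n ≥ 1. Then P̃(limsup_n E_n) ≥ 1 − p. In particular, if P̃(G_n^c) → 0 then P̃(limsup_n E_n) = 1. -/

import Mathlib

open MeasureTheory Filter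

/-- conditional Borel–Cantelli-type zero-one estimate:
if `P(Gₙᶜ) ≤ p` and `P(Eₙ₊₁ | 𝒢_{sₙ}) ≥ bₙ 1_{Gₙ}` a.s. with `Σ bₙ = ∞`, then
`P(limsup Eₙ) ≥ 1 − p`; if moreover `P(Gₙᶜ) → 0`, then `P(limsup Eₙ) = 1`. -/
theorem stmt_10 {Ω : Type*} {m0 : MeasurableSpace Ω} (P : Measure Ω)
    [IsProbabilityMeasure P] (ℱ : Filtration ℝ m0)
    (s : ℕ → ℝ) (hs : StrictMono s) (hstop : Tendsto s atTop atTop)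
    (E G : ℕ → Set Ω)
    (hE : ∀ n, MeasurableSet[ℱ (s n)] (E n))
    (hG : ∀ n, MeasurableSet[ℱ (s n)] (G n))
    (p : ℝ) (hp : 0 < p) (b : ℕ → ℝ)
    (hb : Tendsto (fun N => ∑ n ∈ Finset.range N, b n) atTop atTop)
    (hGp : ∀ n, P (G n)ᶜ ≤ ENNReal.ofReal p)
    (hcond : ∀ n, ∀ᵐ ω ∂P,
      b n * (G n).indicator (fun _ => (1:ℝ)) ω ≤
        (P[(E (n+1)).indicator (fun _ => (1:ℝ)) | ℱ (s n)]) ω) :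
    ENNReal.ofReal (1 - p) ≤ P (limsup E atTop) ∧
      (Tendsto (fun n => P (G n)ᶜ) atTop (nhds 0) → P (limsup E atTop) = 1) := by
  classical
  -- nonnegative replacement of `b`
  set b' : ℕ → ℝ := fun n => max (b n) 0 with hb'def
  have hb'0 : ∀ n, 0 ≤ b' n := fun n => le_max_right _ _
  have hb' : Tendsto (fun N => ∑ n ∈ Finset.range N, b' n) atTop atTop :=
    tendsto_atTop_mono (fun N => Finset.sum_le_sum fun n _ => le_max_left _ _) hb
  set S : ℕ → ℝ := fun N => ∑ n ∈ Finset.range N, b' n with hSdef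
  have hS0 : ∀ N, 0 ≤ S N := fun N => Finset.sum_nonneg fun n _ => hb'0 n
  have hSpos : ∀ᶠ N in atTop, 0 < S N := hb'.eventually_gt_atTop 0
  -- the natural-number filtration
  set 𝒢 : Filtration ℕ m0 :=
    { seq := fun n => ℱ (s n)
      mono' := fun i j hij => ℱ.mono (hs.monotone hij)
      le' := fun n => ℱ.le (s n) } with h𝒢def
  set g : ℕ → Ω → ℝ := fun n => P[(E (n+1)).indicator (fun _ => (1:ℝ)) | ℱ (s n)] with hgdef
  set A : Set Ω := {ω | Tendsto (fun N => ∑ k ∈ Finset.range N, g k ω) atTop atTop} with hAdef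
  have hlimsup : ∀ᵐ ω ∂P, ω ∈ limsup E atTop ↔ ω ∈ A := by
    have := ae_mem_limsup_atTop_iff (ℱ := 𝒢) P hE
    simpa [hAdef, hgdef, Pi.one_def] using this
  have hg0 : ∀ᵐ ω ∂P, ∀ n, 0 ≤ g n ω :=
    ae_all_iff.2 fun n => condExp_nonneg
      (Eventually.of_forall fun ω => Set.indicator_nonneg (fun _ _ => zero_le_one) ω)
  have hcond' : ∀ᵐ ω ∂P, ∀ n, b' n * (G n).indicator (fun _ => (1:ℝ)) ω ≤ g n ω := by
    rw [ae_all_iff]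
    intro n
    filter_upwards [hcond n, hg0] with ω h1 h2
    have hind : 0 ≤ (G n).indicator (fun _ => (1:ℝ)) ω :=
      Set.indicator_nonneg (fun _ _ => zero_le_one) ω
    rw [hb'def]
    rw [max_mul_of_nonneg _ _ hind, zero_mul]
    exact max_le h1 (h2 n)
  -- main objects
  set c : ℕ → ℝ := fun n => (P (G n)ᶜ).toReal with hcdef
  have hc0 : ∀ n, 0 ≤ c n := fun n => ENNReal.toReal_nonneg
  set T : ℕ → Ω → ℝ :=
    fun N ω => ∑ n ∈ Finset.range N, b' n * (G n)ᶜ.indicator (fun _ => (1:ℝ)) ω with hTdef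
  set u : ℕ → ℝ := fun N => ∑ n ∈ Finset.range N, b' n * c n with hudef
  have mGc : ∀ n, MeasurableSet (G n)ᶜ := fun n => (ℱ.le (s n) _ (hG n)).compl
  have hfmeas : ∀ N, Measurable (fun ω => ENNReal.ofReal (T N ω / S N)) := by
    intro N
    have : Measurable (T N) :=
      Finset.measurable_sum _ fun n _ => ((measurable_const.indicator (mGc n)).const_mul _)
    exact (this.div_const _).ennreal_ofReal
  have hTnonneg : ∀ N ω, 0 ≤ T N ω := fun N ω =>
    Finset.sum_nonneg fun n _ =>
      mul_nonneg (hb'0 n) (Set.indicator_nonneg (fun _ _ => zero_le_one) ω)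
  have hint : ∀ N, Integrable (fun ω => T N ω / S N) P := by
    intro N
    refine Integrable.div_const ?_ _
    exact integrable_finset_sum _ fun n _ =>
      (((integrable_const (1:ℝ)).indicator (mGc n)).const_mul _)
  have hIT : ∀ N, ∫ ω, T N ω ∂P = u N := by
    intro N
    rw [hTdef, hudef]
    rw [integral_finset_sum _ fun n _ => (((integrable_const (1:ℝ)).indicator (mGc n)).const_mul _)]
    refine Finset.sum_congr rfl fun n _ => ?_
    rw [integral_const_mul]
    congr 1
    have : ∫ ω, (G n)ᶜ.indicator (fun _ => (1:ℝ)) ω ∂P = ∫ ω, (G n)ᶜ.indicator (1 : Ω → ℝ) ω ∂P :=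
      rfl
    rw [this, integral_indicator_one (mGc n), measureReal_def]
  have hlint : ∀ᶠ N in atTop, ∫⁻ ω, ENNReal.ofReal (T N ω / S N) ∂P
      = ENNReal.ofReal (u N / S N) := by
    filter_upwards [hSpos] with N hN
    rw [← ofReal_integral_eq_lintegral_ofReal (hint N)
      (Eventually.of_forall fun ω => div_nonneg (hTnonneg N ω) (hS0 N))]
    rw [integral_div, hIT]
  -- pointwise lower bound for liminf on Aᶜ
  have hlb : ∀ᵐ ω ∂P, ω ∈ Aᶜ →
      (1 : ENNReal) ≤ liminf (fun N => ENNReal.ofReal (T N ω / S N)) atTop := by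
    filter_upwards [hg0, hcond'] with ω h0 h1 hω
    have hmono : Monotone (fun N => ∑ k ∈ Finset.range N, g k ω) := by
      refine monotone_nat_of_le_succ fun n => ?_
      rw [Finset.sum_range_succ]
      exact le_add_of_nonneg_right (h0 n)
    have hbdd : BddAbove (Set.range fun N => ∑ k ∈ Finset.range N, g k ω) := by
      by_contra hnb
      exact hω (tendsto_atTop_atTop_of_monotone' hmono hnb)
    obtain ⟨C, hC⟩ := hbdd
    have hCbound : ∀ N, ∑ k ∈ Finset.range N, g k ω ≤ C := fun N => hC ⟨N, rfl⟩
    have hTS : ∀ N, S N - C ≤ T N ω := by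
      intro N
      have hVg : ∑ n ∈ Finset.range N, b' n * (G n).indicator (fun _ => (1:ℝ)) ω
          ≤ ∑ k ∈ Finset.range N, g k ω := Finset.sum_le_sum fun n _ => h1 n
      have hTerm : ∀ n, b' n * (G n)ᶜ.indicator (fun _ => (1:ℝ)) ω
          = b' n - b' n * (G n).indicator (fun _ => (1:ℝ)) ω := by
        intro n
        by_cases hmem : ω ∈ G n <;> simp [hmem]
      have : T N ω = S N - ∑ n ∈ Finset.range N, b' n * (G n).indicator (fun _ => (1:ℝ)) ω := by
        rw [hTdef]
        simp only [hTerm]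
        rw [Finset.sum_sub_distrib]
      rw [this]
      have := hVg.trans (hCbound N)
      linarith
    have hq : ∀ᶠ N in atTop, ENNReal.ofReal (1 - C / S N) ≤ ENNReal.ofReal (T N ω / S N) := by
      filter_upwards [hSpos] with N hN
      apply ENNReal.ofReal_le_ofReal
      have h1' : 1 - C / S N = (S N - C) / S N := by
        field_simp
      rw [h1']
      gcongr
      exact hTS N
    have htend : Tendsto (fun N => ENNReal.ofReal (1 - C / S N)) atTop (nhds 1) := by
      have h2 : Tendsto (fun N => 1 - C / S N) atTop (nhds 1) := by
        have := tendsto_const_nhds (x := (1:ℝ)) (f := atTop (α := ℕ))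
        simpa using this.sub (Tendsto.div_atTop (tendsto_const_nhds (x := C)) hb')
      have := ENNReal.tendsto_ofReal h2
      simpa using this
    calc (1 : ENNReal) = liminf (fun N => ENNReal.ofReal (1 - C / S N)) atTop :=
          (htend.liminf_eq).symm
      _ ≤ liminf (fun N => ENNReal.ofReal (T N ω / S N)) atTop := liminf_le_liminf hq
  -- the key bound
  have key : ∀ q : ℝ, 0 ≤ q → (∀ᶠ n in atTop, c n ≤ q) → P Aᶜ ≤ ENNReal.ofReal q := by
    intro q hq0 hq
    obtain ⟨K, hK⟩ := eventually_atTop.1 hq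
    have step1 : P Aᶜ ≤ P {ω | (1:ENNReal) ≤ liminf (fun N => ENNReal.ofReal (T N ω / S N)) atTop} :=
      measure_mono_ae hlb
    have hmeasliminf : Measurable fun ω => liminf (fun N => ENNReal.ofReal (T N ω / S N)) atTop :=
      Measurable.liminf hfmeas
    have step2 : P {ω | (1:ENNReal) ≤ liminf (fun N => ENNReal.ofReal (T N ω / S N)) atTop}
        ≤ ∫⁻ ω, liminf (fun N => ENNReal.ofReal (T N ω / S N)) atTop ∂P := by
      have := mul_meas_ge_le_lintegral₀ (μ := P) hmeasliminf.aemeasurable 1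
      simpa using this
    have step3 : ∫⁻ ω, liminf (fun N => ENNReal.ofReal (T N ω / S N)) atTop ∂P
        ≤ liminf (fun N => ∫⁻ ω, ENNReal.ofReal (T N ω / S N) ∂P) atTop :=
      lintegral_liminf_le hfmeas
    have step4 : liminf (fun N => ∫⁻ ω, ENNReal.ofReal (T N ω / S N) ∂P) atTop
        ≤ ENNReal.ofReal q := by
      have hbound : ∀ᶠ N in atTop, ∫⁻ ω, ENNReal.ofReal (T N ω / S N) ∂P
          ≤ ENNReal.ofReal (u K / S N + q) := by
        filter_upwards [hlint, hSpos, eventually_ge_atTop K] with N h1 h2 h3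
        rw [h1]
        apply ENNReal.ofReal_le_ofReal
        have huN : u N ≤ u K + q * S N := by
          have hIco : ∑ n ∈ Finset.Ico K N, b' n * c n = u N - u K :=
            Finset.sum_Ico_eq_sub _ h3
          have hIco2 : ∑ n ∈ Finset.Ico K N, b' n * c n
              ≤ ∑ n ∈ Finset.Ico K N, b' n * q :=
            Finset.sum_le_sum fun n hn =>
              mul_le_mul_of_nonneg_left (hK n (Finset.mem_Ico.1 hn).1) (hb'0 n)
          have hIco3 : ∑ n ∈ Finset.Ico K N, b' n * q = (S N - S K) * q := by
            rw [← Finset.sum_mul, Finset.sum_Ico_eq_sub _ h3]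
          have hSKq : 0 ≤ S K * q := mul_nonneg (hS0 K) hq0
          rw [hIco3] at hIco2
          rw [hIco] at hIco2
          nlinarith
        calc u N / S N ≤ (u K + q * S N) / S N := by gcongr
          _ = u K / S N + q := by field_simp
      have htend2 : Tendsto (fun N => ENNReal.ofReal (u K / S N + q)) atTop
          (nhds (ENNReal.ofReal q)) := by
        have h2 : Tendsto (fun N => u K / S N + q) atTop (nhds q) := by
          have := (Tendsto.div_atTop (tendsto_const_nhds (x := u K)) hb').add
            (tendsto_const_nhds (x := q))
          simpa using this
        exact ENNReal.tendsto_ofReal h2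
      calc liminf (fun N => ∫⁻ ω, ENNReal.ofReal (T N ω / S N) ∂P) atTop
          ≤ liminf (fun N => ENNReal.ofReal (u K / S N + q)) atTop := liminf_le_liminf hbound
        _ = ENNReal.ofReal q := htend2.liminf_eq
    exact ((step1.trans step2).trans step3).trans step4
  -- 1 ≤ P(limsup E) + P(Aᶜ)
  have h1le : (1 : ENNReal) ≤ P (limsup E atTop) + P Aᶜ := by
    have hsub : (Set.univ : Set Ω) ≤ᵐ[P] ((limsup E atTop ∪ Aᶜ : Set Ω)) := by
      filter_upwards [hlimsup] with ω hω _
      by_cases hA : ω ∈ A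
      · exact Or.inl (hω.2 hA)
      · exact Or.inr hA
    calc (1 : ENNReal) = P Set.univ := (measure_univ).symm
      _ ≤ P (limsup E atTop ∪ Aᶜ) := measure_mono_ae hsub
      _ ≤ P (limsup E atTop) + P Aᶜ := measure_union_le _ _
  constructor
  · have hcp : ∀ n, c n ≤ p := by
      intro n
      have := ENNReal.toReal_mono ENNReal.ofReal_ne_top (hGp n)
      rwa [ENNReal.toReal_ofReal hp.le] at this
    have hAp : P Aᶜ ≤ ENNReal.ofReal p := key p hp.le (Eventually.of_forall hcp)
    have : (1 : ENNReal) ≤ P (limsup E atTop) + ENNReal.ofReal p :=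
      h1le.trans (add_le_add le_rfl hAp)
    have h2 : ENNReal.ofReal (1 - p) = 1 - ENNReal.ofReal p := by
      rw [ENNReal.ofReal_sub _ hp.le, ENNReal.ofReal_one]
    rw [h2]
    exact tsub_le_iff_right.2 this
  · intro hGt
    have hA0 : P Aᶜ = 0 := by
      refine le_antisymm ?_ zero_le
      refine ENNReal.le_of_forall_pos_le_add fun ε hε _ => ?_
      rw [zero_add]
      have hεpos : (0:ENNReal) < ENNReal.ofReal (ε:ℝ) := ENNReal.ofReal_pos.2 hε
      have hcε : ∀ᶠ n in atTop, c n ≤ (ε:ℝ) := by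
        filter_upwards [hGt.eventually_lt_const hεpos] with n hn
        have h2 := ENNReal.toReal_mono ENNReal.ofReal_ne_top hn.le
        rwa [ENNReal.toReal_ofReal ε.coe_nonneg] at h2
      have := key (ε:ℝ) ε.coe_nonneg hcε
      rwa [ENNReal.ofReal_coe_nnreal] at this
    refine le_antisymm prob_le_one ?_
    simpa [hA0] using h1le
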